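/- Let X be a finite set, K : X × X → ℝ a kernel, and p, q probability distributions on X. Let N, M ≥ 2, and let X₁,…,X_N be i.i.d. random variables with law p and Y₁,…,Y_M i.i.d. with law q, all N + M variables mutually independent. Then the estimator (1/(N(N−1))) Σ_{i≠j} K(X_i,X_j) − (2/(NM)) Σ_{i,j} K(X_i,Y_j) + (1/(M(M−1))) Σ_{i≠j} K(Y_i,Y_j) is unbiased: its expectation equals MMD²(p,q). -/

import Mathlib

open MeasureTheory ProbabilityTheory

/-- The squared maximum mean discrepancy between distributions `p, q` on a finite set,
with respect to a kernel `K`. -/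
noncomputable def mmdSq {X : Type*} [Fintype X] (K : X → X → ℝ) (p q : X → ℝ) : ℝ :=
  ∑ x, ∑ y, p x * p y * K x y - 2 * ∑ x, ∑ y, p x * q y * K x y
    + ∑ x, ∑ y, q x * q y * K x y

section aux
variable {X : Type*} [Fintype X] [DecidableEq X] [MeasurableSpace X]
    [MeasurableSingletonClass X]
    {Ω : Type*} [MeasurableSpace Ω] {μ : Measure Ω} [IsProbabilityMeasure μ]

lemma integrable_K_aux (K : X → X → ℝ) (U V : Ω → X) (hU : Measurable U) (hV : Measurable V) :
    Integrable (fun ω => K (U ω) (V ω)) μ := by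
  have hmeas : Measurable (fun ω => K (U ω) (V ω)) :=
    (measurable_of_countable (Function.uncurry K)).comp (hU.prodMk hV)
  refine (integrable_const (∑ x : X, ∑ y : X, |K x y|)).mono'
    hmeas.aestronglyMeasurable ?_
  filter_upwards with ω
  calc ‖K (U ω) (V ω)‖ = |K (U ω) (V ω)| := rfl
    _ ≤ ∑ y : X, |K (U ω) y| :=
        Finset.single_le_sum (f := fun y => |K (U ω) y|)
          (fun y _ => abs_nonneg _) (Finset.mem_univ _)
    _ ≤ ∑ x : X, ∑ y : X, |K x y| :=
        Finset.single_le_sum (f := fun x => ∑ y : X, |K x y|)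
          (fun x _ => Finset.sum_nonneg fun y _ => abs_nonneg _) (Finset.mem_univ _)

lemma exp_K_aux (K : X → X → ℝ) (p q : X → ℝ) (hp0 : ∀ x, 0 ≤ p x) (hq0 : ∀ x, 0 ≤ q x)
    (U V : Ω → X) (hU : Measurable U) (hV : Measurable V)
    (hUlaw : ∀ x, μ (U ⁻¹' {x}) = ENNReal.ofReal (p x))
    (hVlaw : ∀ y, μ (V ⁻¹' {y}) = ENNReal.ofReal (q y))
    (hind : IndepFun U V μ) :
    ∫ ω, K (U ω) (V ω) ∂μ = ∑ x, ∑ y, p x * q y * K x y := by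
  have key : ∀ ω, K (U ω) (V ω)
      = ∑ x, ∑ y, Set.indicator (U ⁻¹' {x} ∩ V ⁻¹' {y}) (fun _ => K x y) ω := by
    intro ω
    have h1 : ∀ x y : X, Set.indicator (U ⁻¹' {x} ∩ V ⁻¹' {y}) (fun _ => K x y) ω
        = (if U ω = x ∧ V ω = y then K x y else 0) := by
      intro x y
      by_cases h : U ω = x ∧ V ω = y
      · rw [if_pos h, Set.indicator_of_mem (by simpa using h)]
      · rw [if_neg h, Set.indicator_of_notMem (by simpa using h)]
    simp_rw [h1]
    simp [ite_and, Finset.sum_ite_eq]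
  have hint : ∀ x y : X,
      Integrable (Set.indicator (U ⁻¹' {x} ∩ V ⁻¹' {y}) (fun _ => K x y)) μ := by
    intro x y
    exact (integrable_const (K x y)).indicator
      ((hU (measurableSet_singleton x)).inter (hV (measurableSet_singleton y)))
  calc ∫ ω, K (U ω) (V ω) ∂μ
      = ∫ ω, ∑ x, ∑ y, Set.indicator (U ⁻¹' {x} ∩ V ⁻¹' {y}) (fun _ => K x y) ω ∂μ := by
        simp_rw [key]
    _ = ∑ x, ∑ y, ∫ ω, Set.indicator (U ⁻¹' {x} ∩ V ⁻¹' {y}) (fun _ => K x y) ω ∂μ := by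
        rw [integral_finset_sum _ fun x _ => integrable_finset_sum _ fun y _ => hint x y]
        exact Finset.sum_congr rfl fun x _ => integral_finset_sum _ fun y _ => hint x y
    _ = ∑ x, ∑ y, p x * q y * K x y := by
        refine Finset.sum_congr rfl fun x _ => Finset.sum_congr rfl fun y _ => ?_
        rw [integral_indicator_const _
          ((hU (measurableSet_singleton x)).inter (hV (measurableSet_singleton y)))]
        rw [measureReal_def]
        rw [hind.measure_inter_preimage_eq_mul _ _ (measurableSet_singleton x)
          (measurableSet_singleton y), hUlaw, hVlaw,
          ← ENNReal.ofReal_mul (hp0 x)]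
        rw [ENNReal.toReal_ofReal (mul_nonneg (hp0 x) (hq0 y)), smul_eq_mul]

end aux

/-- Let `X` be a finite set, `K : X × X → ℝ` a kernel, and `p, q` probability distributions
on `X`.  Let `N, M ≥ 2` and let `X₁, …, X_N` be i.i.d. random variables with law `p` and
`Y₁, …, Y_M` i.i.d. with law `q`, all `N + M` variables mutually independent.  Then the
estimator
`(1/(N(N-1))) ∑_{i≠j} K(Xᵢ,Xⱼ) - (2/(NM)) ∑_{i,j} K(Xᵢ,Yⱼ) + (1/(M(M-1))) ∑_{i≠j} K(Yᵢ,Yⱼ)`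
is unbiased: its expectation equals `MMD²(p,q)`. -/
theorem mmd_estimator_unbiased
    {X : Type*} [Fintype X] [DecidableEq X] [MeasurableSpace X]
    [MeasurableSingletonClass X]
    (K : X → X → ℝ) (p q : X → ℝ)
    (hp0 : ∀ x, 0 ≤ p x) (hp1 : ∑ x, p x = 1)
    (hq0 : ∀ x, 0 ≤ q x) (hq1 : ∑ x, q x = 1)
    (N M : ℕ) (hN : 2 ≤ N) (hM : 2 ≤ M)
    {Ω : Type*} [MeasurableSpace Ω] (μ : Measure Ω) [IsProbabilityMeasure μ]
    (Xv : Fin N → Ω → X) (Yv : Fin M → Ω → X)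
    (hXmeas : ∀ i, Measurable (Xv i)) (hYmeas : ∀ j, Measurable (Yv j))
    (hXlaw : ∀ i x, μ (Xv i ⁻¹' {x}) = ENNReal.ofReal (p x))
    (hYlaw : ∀ j y, μ (Yv j ⁻¹' {y}) = ENNReal.ofReal (q y))
    (hindep : iIndepFun
      (Sum.elim Xv Yv) μ) :
    ∫ ω, ((1 / ((N : ℝ) * ((N : ℝ) - 1))) *
            ∑ i, ∑ j ∈ Finset.univ.erase i, K (Xv i ω) (Xv j ω)
          - (2 / ((N : ℝ) * (M : ℝ))) * ∑ i, ∑ j, K (Xv i ω) (Yv j ω)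
          + (1 / ((M : ℝ) * ((M : ℝ) - 1))) *
            ∑ i, ∑ j ∈ Finset.univ.erase i, K (Yv i ω) (Yv j ω)) ∂μ
      = mmdSq K p q := by
  have hint1 : Integrable (fun ω => ∑ i, ∑ j ∈ Finset.univ.erase i,
      K (Xv i ω) (Xv j ω)) μ :=
    integrable_finset_sum _ fun i _ => integrable_finset_sum _ fun j _ =>
      integrable_K_aux K (Xv i) (Xv j) (hXmeas i) (hXmeas j)
  have hint2 : Integrable (fun ω => ∑ i, ∑ j, K (Xv i ω) (Yv j ω)) μ :=
    integrable_finset_sum _ fun i _ => integrable_finset_sum _ fun j _ =>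
      integrable_K_aux K (Xv i) (Yv j) (hXmeas i) (hYmeas j)
  have hint3 : Integrable (fun ω => ∑ i, ∑ j ∈ Finset.univ.erase i,
      K (Yv i ω) (Yv j ω)) μ :=
    integrable_finset_sum _ fun i _ => integrable_finset_sum _ fun j _ =>
      integrable_K_aux K (Yv i) (Yv j) (hYmeas i) (hYmeas j)
  have hXX : ∀ i j : Fin N, i ≠ j → IndepFun (Xv i) (Xv j) μ := fun i j h =>
    hindep.indepFun (show (Sum.inl i : Fin N ⊕ Fin M) ≠ Sum.inl j by simpa using h)
  have hXY : ∀ (i : Fin N) (j : Fin M), IndepFun (Xv i) (Yv j) μ := fun i j =>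
    hindep.indepFun (show (Sum.inl i : Fin N ⊕ Fin M) ≠ Sum.inr j by simp)
  have hYY : ∀ i j : Fin M, i ≠ j → IndepFun (Yv i) (Yv j) μ := fun i j h =>
    hindep.indepFun (show (Sum.inr i : Fin N ⊕ Fin M) ≠ Sum.inr j by simpa using h)
  have hNR : (1:ℝ) ≤ (N:ℝ) := by exact_mod_cast Nat.one_le_of_lt hN
  have hMR : (1:ℝ) ≤ (M:ℝ) := by exact_mod_cast Nat.one_le_of_lt hM
  have hNne : (N:ℝ) ≠ 0 := by positivity
  have hN1ne : (N:ℝ) - 1 ≠ 0 := by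
    have : (2:ℝ) ≤ (N:ℝ) := by exact_mod_cast hN
    linarith
  have hMne : (M:ℝ) ≠ 0 := by positivity
  have hM1ne : (M:ℝ) - 1 ≠ 0 := by
    have : (2:ℝ) ≤ (M:ℝ) := by exact_mod_cast hM
    linarith
  have h1 : ∫ ω, (∑ i, ∑ j ∈ Finset.univ.erase i, K (Xv i ω) (Xv j ω)) ∂μ
      = ((N:ℝ) * ((N:ℝ) - 1)) * ∑ x, ∑ y, p x * p y * K x y := by
    rw [integral_finset_sum _ fun i _ => integrable_finset_sum _ fun j _ =>
      integrable_K_aux K (Xv i) (Xv j) (hXmeas i) (hXmeas j)]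
    have : ∀ i : Fin N, ∫ ω, (∑ j ∈ Finset.univ.erase i, K (Xv i ω) (Xv j ω)) ∂μ
        = ∑ j ∈ Finset.univ.erase i, ∑ x, ∑ y, p x * p y * K x y := by
      intro i
      rw [integral_finset_sum _ fun j _ =>
        integrable_K_aux K (Xv i) (Xv j) (hXmeas i) (hXmeas j)]
      refine Finset.sum_congr rfl fun j hj => ?_
      exact exp_K_aux K p p hp0 hp0 (Xv i) (Xv j) (hXmeas i) (hXmeas j)
        (hXlaw i) (hXlaw j) (hXX i j (Finset.ne_of_mem_erase hj).symm)
    simp_rw [this]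
    simp only [Finset.sum_const, Finset.card_erase_of_mem, Finset.mem_univ,
      Finset.card_univ, Fintype.card_fin, nsmul_eq_mul]
    rw [Nat.cast_sub (by omega)]
    push_cast
    ring
  have h2 : ∫ ω, (∑ i, ∑ j, K (Xv i ω) (Yv j ω)) ∂μ
      = ((N:ℝ) * (M:ℝ)) * ∑ x, ∑ y, p x * q y * K x y := by
    rw [integral_finset_sum _ fun i _ => integrable_finset_sum _ fun j _ =>
      integrable_K_aux K (Xv i) (Yv j) (hXmeas i) (hYmeas j)]
    have : ∀ i : Fin N, ∫ ω, (∑ j, K (Xv i ω) (Yv j ω)) ∂μ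
        = ∑ j : Fin M, ∑ x, ∑ y, p x * q y * K x y := by
      intro i
      rw [integral_finset_sum _ fun j _ =>
        integrable_K_aux K (Xv i) (Yv j) (hXmeas i) (hYmeas j)]
      refine Finset.sum_congr rfl fun j _ => ?_
      exact exp_K_aux K p q hp0 hq0 (Xv i) (Yv j) (hXmeas i) (hYmeas j)
        (hXlaw i) (hYlaw j) (hXY i j)
    simp_rw [this]
    simp [Finset.sum_const, Finset.card_univ, mul_assoc]
  have h3 : ∫ ω, (∑ i, ∑ j ∈ Finset.univ.erase i, K (Yv i ω) (Yv j ω)) ∂μ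
      = ((M:ℝ) * ((M:ℝ) - 1)) * ∑ x, ∑ y, q x * q y * K x y := by
    rw [integral_finset_sum _ fun i _ => integrable_finset_sum _ fun j _ =>
      integrable_K_aux K (Yv i) (Yv j) (hYmeas i) (hYmeas j)]
    have : ∀ i : Fin M, ∫ ω, (∑ j ∈ Finset.univ.erase i, K (Yv i ω) (Yv j ω)) ∂μ
        = ∑ j ∈ Finset.univ.erase i, ∑ x, ∑ y, q x * q y * K x y := by
      intro i
      rw [integral_finset_sum _ fun j _ =>
        integrable_K_aux K (Yv i) (Yv j) (hYmeas i) (hYmeas j)]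
      refine Finset.sum_congr rfl fun j hj => ?_
      exact exp_K_aux K q q hq0 hq0 (Yv i) (Yv j) (hYmeas i) (hYmeas j)
        (hYlaw i) (hYlaw j) (hYY i j (Finset.ne_of_mem_erase hj).symm)
    simp_rw [this]
    simp only [Finset.sum_const, Finset.card_erase_of_mem, Finset.mem_univ,
      Finset.card_univ, Fintype.card_fin, nsmul_eq_mul]
    rw [Nat.cast_sub (by omega)]
    push_cast
    ring
  have hsub : Integrable (fun ω => (1 / ((N : ℝ) * ((N : ℝ) - 1))) *
      (∑ i, ∑ j ∈ Finset.univ.erase i, K (Xv i ω) (Xv j ω))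
      - (2 / ((N : ℝ) * (M : ℝ))) * ∑ i, ∑ j, K (Xv i ω) (Yv j ω)) μ :=
    (hint1.const_mul _).sub (hint2.const_mul _)
  rw [integral_add hsub (hint3.const_mul _),
    integral_sub (hint1.const_mul _) (hint2.const_mul _),
    integral_const_mul, integral_const_mul, integral_const_mul, h1, h2, h3, mmdSq]
  field_simp
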